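/- Let φ : Sp(2,ℝ) → ℂ be a K-bi-invariant function, i.e., φ(k₁·g·k₂) = φ(g) for all g ∈ Sp(2,ℝ) and k₁, k₂ ∈ K. Fix α ∈ ℝ, let D'_α = diag(e^α, e^α, e^{−α}, e^{−α}), let v = ((1+i)/√2)·I₂ ∈ U(2), and define χ̃_α : U(2) → ℂ by χ̃_α(u) = φ(D'_α·κ(u)·κ(v)·D'_α). Then χ̃_α is bi-invariant under the subgroup SO(2) = {R_θ : θ ∈ ℝ} of U(2), where R_θ is the rotation matrix with rows (cos θ, −sin θ) and (sin θ, cos θ): for all u ∈ U(2) and θ, θ' ∈ ℝ, χ̃_α(R_θ·u·R_{θ'}) = χ̃_α(u). -/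
import Mathlib

open Real Complex Matrix

/-- The standard symplectic form matrix `J = [[0, I₂], [−I₂, 0]]`. -/
def Jmat : Matrix (Fin 4) (Fin 4) ℝ :=
  Matrix.reindex finSumFinEquiv finSumFinEquiv
    (Matrix.fromBlocks (0 : Matrix (Fin 2) (Fin 2) ℝ) (1 : Matrix (Fin 2) (Fin 2) ℝ)
      (-1 : Matrix (Fin 2) (Fin 2) ℝ) (0 : Matrix (Fin 2) (Fin 2) ℝ))

/-- The symplectic group `Sp(2,ℝ)` as a set of 4×4 real matrices. -/
def Sp2 : Set (Matrix (Fin 4) (Fin 4) ℝ) := {g | gᵀ * Jmat * g = Jmat}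

/-- The embedding `κ : M₂(ℂ) → M₄(ℝ)` sending `A + iB` to `[[A, −B], [B, A]]`. -/
def kappa (u : Matrix (Fin 2) (Fin 2) ℂ) : Matrix (Fin 4) (Fin 4) ℝ :=
  Matrix.reindex finSumFinEquiv finSumFinEquiv
    (Matrix.fromBlocks (Matrix.of fun i j => (u i j).re)
      (Matrix.of fun i j => -(u i j).im)
      (Matrix.of fun i j => (u i j).im)
      (Matrix.of fun i j => (u i j).re))

/-- The maximal compact subgroup `K = κ(U(2))` of `Sp(2,ℝ)`. -/
def Kgp : Set (Matrix (Fin 4) (Fin 4) ℝ) :=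
  {m | ∃ u ∈ Matrix.unitaryGroup (Fin 2) ℂ, m = kappa u}

/-- `D(α₁, α₂) = diag(e^{α₁}, e^{α₂}, e^{−α₁}, e^{−α₂})`. -/
noncomputable def Dmat (α₁ α₂ : ℝ) : Matrix (Fin 4) (Fin 4) ℝ :=
  Matrix.diagonal ![Real.exp α₁, Real.exp α₂, Real.exp (-α₁), Real.exp (-α₂)]

/-- `D'_α = diag(e^α, e^α, e^{−α}, e^{−α})`. -/
noncomputable def Dalpha' (α : ℝ) : Matrix (Fin 4) (Fin 4) ℝ :=
  Matrix.diagonal ![Real.exp α, Real.exp α, Real.exp (-α), Real.exp (-α)]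

/-- The central element `v = ((1+i)/√2)·I₂` of `U(2)`. -/
noncomputable def vmat : Matrix (Fin 2) (Fin 2) ℂ :=
  ((1 + Complex.I) / (Real.sqrt 2 : ℂ)) • (1 : Matrix (Fin 2) (Fin 2) ℂ)

/-- The rotation matrix `R_θ`, viewed as an element of `U(2)`. -/
noncomputable def rot (θ : ℝ) : Matrix (Fin 2) (Fin 2) ℂ :=
  !![(Real.cos θ : ℂ), -(Real.sin θ : ℂ); (Real.sin θ : ℂ), (Real.cos θ : ℂ)]

lemma fsf_e0 : (finSumFinEquiv (m := 2) (n := 2)).symm (0:Fin (2+2)) = Sum.inl (0:Fin 2) := rfl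
lemma fsf_e1 : (finSumFinEquiv (m := 2) (n := 2)).symm (1:Fin (2+2)) = Sum.inl (1:Fin 2) := rfl
lemma fsf_e2 : (finSumFinEquiv (m := 2) (n := 2)).symm (2:Fin (2+2)) = Sum.inr (0:Fin 2) := rfl
lemma fsf_e3 : (finSumFinEquiv (m := 2) (n := 2)).symm (3:Fin (2+2)) = Sum.inr (1:Fin 2) := rfl

lemma kappa_mul (u w : Matrix (Fin 2) (Fin 2) ℂ) : kappa (u*w) = kappa u * kappa w := by
  unfold kappa
  rw [Matrix.reindex_apply, Matrix.reindex_apply, Matrix.reindex_apply,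
      Matrix.submatrix_mul_equiv, Matrix.fromBlocks_multiply]
  have h : ∀ (A B C D : Matrix (Fin 2) (Fin 2) ℝ),
      (Matrix.of fun i j => ((u*w) i j).re) = A → (Matrix.of fun i j => -((u*w) i j).im) = B →
      (Matrix.of fun i j => ((u*w) i j).im) = C → (Matrix.of fun i j => ((u*w) i j).re) = D →
      Matrix.fromBlocks (Matrix.of fun i j => ((u*w) i j).re) (Matrix.of fun i j => -((u*w) i j).im)
        (Matrix.of fun i j => ((u*w) i j).im) (Matrix.of fun i j => ((u*w) i j).re)
      = Matrix.fromBlocks A B C D := by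
    rintro A B C D rfl rfl rfl rfl; rfl
  rw [h] <;>
  · ext i j
    simp [Matrix.mul_apply, Fin.sum_univ_two, Complex.mul_re, Complex.mul_im]
    ring

lemma kappa_transpose (u : Matrix (Fin 2) (Fin 2) ℂ) : (kappa u)ᵀ = kappa uᴴ := by
  ext i j
  fin_cases i <;> fin_cases j <;>
    simp [kappa, Matrix.transpose_apply, Matrix.conjTranspose_apply,
      fsf_e0, fsf_e1, fsf_e2, fsf_e3]

lemma kappa_neg_I : kappa (-Complex.I • 1) = Jmat := by
  ext i j
  fin_cases i <;> fin_cases j <;>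
    simp [kappa, Jmat, Matrix.one_apply, fsf_e0, fsf_e1, fsf_e2, fsf_e3]

lemma kappa_mem_Sp2 {u : Matrix (Fin 2) (Fin 2) ℂ}
    (hu : u ∈ Matrix.unitaryGroup (Fin 2) ℂ) : kappa u ∈ Sp2 := by
  have hu' : uᴴ * u = 1 := Matrix.mem_unitaryGroup_iff'.mp hu
  show (kappa u)ᵀ * Jmat * kappa u = Jmat
  rw [kappa_transpose, ← kappa_neg_I, ← kappa_mul, ← kappa_mul]
  rw [Matrix.mul_smul, Matrix.mul_one, Matrix.smul_mul, hu']

lemma Sp2_mul {a b : Matrix (Fin 4) (Fin 4) ℝ} (ha : a ∈ Sp2) (hb : b ∈ Sp2) :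
    a * b ∈ Sp2 := by
  have ha' : aᵀ * Jmat * a = Jmat := ha
  have hb' : bᵀ * Jmat * b = Jmat := hb
  show (a*b)ᵀ * Jmat * (a*b) = Jmat
  rw [Matrix.transpose_mul]
  calc bᵀ * aᵀ * Jmat * (a * b) = bᵀ * (aᵀ * Jmat * a) * b := by
        simp only [Matrix.mul_assoc]
    _ = Jmat := by rw [ha', hb']

lemma D_mem_Sp2 (α : ℝ) : Dalpha' α ∈ Sp2 := by
  show (Dalpha' α)ᵀ * Jmat * Dalpha' α = Jmat
  ext i j
  fin_cases i <;> fin_cases j <;>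
    simp [Dalpha', Jmat, Matrix.mul_apply, Fin.sum_univ_four, Matrix.diagonal,
      fsf_e0, fsf_e1, fsf_e2, fsf_e3, ← Real.exp_add]

lemma D_comm_rot (α θ : ℝ) : Dalpha' α * kappa (rot θ) = kappa (rot θ) * Dalpha' α := by
  ext i j
  fin_cases i <;> fin_cases j <;>
    simp [Dalpha', kappa, rot, Matrix.mul_apply, Fin.sum_univ_four, Matrix.diagonal,
      fsf_e0, fsf_e1, fsf_e2, fsf_e3, mul_comm]

lemma rot_unitary (θ : ℝ) : rot θ ∈ Matrix.unitaryGroup (Fin 2) ℂ := by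
  rw [Matrix.mem_unitaryGroup_iff']
  ext i j
  fin_cases i <;> fin_cases j <;>
    · simp [rot, Matrix.mul_apply, Fin.sum_univ_two, Matrix.one_apply,
        Matrix.conjTranspose_apply, ← Complex.ofReal_sin, ← Complex.ofReal_cos,
        Complex.conj_ofReal, ← Complex.ofReal_mul, ← Complex.ofReal_add, ← Complex.ofReal_neg]
      norm_cast
      nlinarith [Real.sin_sq_add_cos_sq θ]

lemma vmat_unitary : vmat ∈ Matrix.unitaryGroup (Fin 2) ℂ := by
  rw [Matrix.mem_unitaryGroup_iff']
  have hc : ((1 + Complex.I) / (Real.sqrt 2 : ℂ))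
      * ((1 + -Complex.I) / (Real.sqrt 2 : ℂ)) = 1 := by
    rw [div_mul_div_comm]
    rw [show ((1:ℂ) + Complex.I) * (1 + -Complex.I) = 2 by
      ring_nf; rw [Complex.I_sq]; ring]
    rw [show ((Real.sqrt 2:ℝ):ℂ) * ((Real.sqrt 2:ℝ):ℂ) = 2 by
      norm_cast; exact Real.mul_self_sqrt (by norm_num)]
    norm_num
  simp [vmat, Matrix.conjTranspose_smul, smul_smul, Complex.star_def, map_div₀,
    Complex.conj_I, Complex.conj_ofReal, hc]

lemma vmat_comm (x : Matrix (Fin 2) (Fin 2) ℂ) : x * vmat = vmat * x := by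
  rw [vmat, Matrix.mul_smul, Matrix.smul_mul, Matrix.mul_one, Matrix.one_mul]

lemma swap_right {M : Type*} [Monoid M] {b c : M} (h : b * c = c * b) (x : M) :
    x * b * c = x * c * b := by rw [mul_assoc, h, ← mul_assoc]

theorem chi_alpha_biinvariant (φ : Matrix (Fin 4) (Fin 4) ℝ → ℂ)
    (hφ : ∀ g ∈ Sp2, ∀ k₁ ∈ Kgp, ∀ k₂ ∈ Kgp, φ (k₁ * g * k₂) = φ g)
    (α : ℝ) (χ : Matrix (Fin 2) (Fin 2) ℂ → ℂ)
    (hχ : ∀ u : Matrix (Fin 2) (Fin 2) ℂ,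
      χ u = φ (Dalpha' α * kappa u * kappa vmat * Dalpha' α)) :
    ∀ u ∈ Matrix.unitaryGroup (Fin 2) ℂ, ∀ θ θ' : ℝ,
      χ (rot θ * u * rot θ') = χ u := by
  intro u hu θ θ'
  rw [hχ, hχ]
  have hvcomm : kappa (rot θ') * kappa vmat = kappa vmat * kappa (rot θ') := by
    rw [← kappa_mul, ← kappa_mul, ← vmat_comm]
  have key : Dalpha' α * kappa (rot θ * u * rot θ') * kappa vmat * Dalpha' α
      = kappa (rot θ) * (Dalpha' α * kappa u * kappa vmat * Dalpha' α) * kappa (rot θ') := by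
    rw [kappa_mul, kappa_mul]
    calc Dalpha' α * (kappa (rot θ) * kappa u * kappa (rot θ')) * kappa vmat * Dalpha' α
        = Dalpha' α * kappa (rot θ) * kappa u * kappa (rot θ') * kappa vmat * Dalpha' α := by
          simp only [Matrix.mul_assoc]
      _ = kappa (rot θ) * Dalpha' α * kappa u * kappa (rot θ') * kappa vmat * Dalpha' α := by
          rw [D_comm_rot]
      _ = kappa (rot θ) * Dalpha' α * kappa u * kappa vmat * kappa (rot θ') * Dalpha' α := by
          rw [swap_right hvcomm]
      _ = kappa (rot θ) * Dalpha' α * kappa u * kappa vmat * Dalpha' α * kappa (rot θ') := by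
          rw [swap_right (D_comm_rot α θ').symm]
      _ = kappa (rot θ) * (Dalpha' α * kappa u * kappa vmat * Dalpha' α) * kappa (rot θ') := by
          simp only [Matrix.mul_assoc]
  rw [key]
  exact hφ _ (Sp2_mul (Sp2_mul (Sp2_mul (D_mem_Sp2 α) (kappa_mem_Sp2 hu))
      (kappa_mem_Sp2 vmat_unitary)) (D_mem_Sp2 α))
    _ ⟨rot θ, rot_unitary θ, rfl⟩ _ ⟨rot θ', rot_unitary θ', rfl⟩
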